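/- arXiv:0706.1286 — 2 statements merged into one kernel-verified Lean document; each statement's English description precedes it below -/
import Mathlib

section
/- Let F ⊣ G be an adjunction of lax monoidal functors between monoidal categories in which the unit and counit are monoidal natural transformations. Then the left adjoint F is strong monoidal: its lax structure maps F_⊗ : F M ⊗ F N ⟶ F(M ⊗ N) and F_U : 1 ⟶ F 1 are isomorphisms, with inverse of F_⊗ given by the composite F(M ⊗ N) ⟶ F(GFM ⊗ GFN) ⟶ FG(FM ⊗ FN) ⟶ FM ⊗ FN. -/
open CategoryTheory MonoidalCategory Functor.LaxMonoidal

/-- Doctrinal adjunction: if `F ⊣ G` is an adjunction of lax monoidal functors whose unit and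
counit are monoidal natural transformations, then the left adjoint `F` is strong monoidal: its
structure maps `ε : 𝟙_D ⟶ F(𝟙_C)` and `μ : F M ⊗ F N ⟶ F (M ⊗ N)` are isomorphisms, the inverse
of `μ` being the composite `F(M ⊗ N) ⟶ F(GFM ⊗ GFN) ⟶ FG(FM ⊗ FN) ⟶ FM ⊗ FN`. -/
theorem stmt_10 {C D : Type*} [Category C] [Category D]
    [MonoidalCategory C] [MonoidalCategory D]
    (F : C ⥤ D) (G : D ⥤ C) [F.LaxMonoidal] [G.LaxMonoidal]
    (adj : F ⊣ G)
    (hunit : NatTrans.IsMonoidal adj.unit) (hcounit : NatTrans.IsMonoidal adj.counit) :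
    IsIso (ε F) ∧
      ∀ M N : C,
        μ F M N ≫
            (F.map (adj.unit.app M ⊗ₘ adj.unit.app N) ≫ F.map (μ G (F.obj M) (F.obj N)) ≫
              adj.counit.app (F.obj M ⊗ F.obj N)) = 𝟙 _ ∧
          (F.map (adj.unit.app M ⊗ₘ adj.unit.app N) ≫ F.map (μ G (F.obj M) (F.obj N)) ≫
              adj.counit.app (F.obj M ⊗ F.obj N)) ≫ μ F M N = 𝟙 _ := by
  have hcu := hcounit.unit
  have hct := hcounit.tensor
  have hut := hunit.tensor
  simp only [comp_ε, comp_μ, id_ε, id_μ, Category.id_comp, Category.assoc] at hcu hct hut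
  constructor
  · refine ⟨F.map (ε G) ≫ adj.counit.app (𝟙_ D), ?_, ?_⟩
    · simpa using hcu
    · have hn := adj.counit.naturality (ε F)
      have huu := hunit.unit
      simp only [comp_ε, id_ε, Category.id_comp] at huu
      simp only [Functor.id_obj, Functor.comp_obj, Functor.id_map, Functor.comp_map] at hn
      rw [Category.assoc, ← hn, ← Category.assoc, ← F.map_comp, ← huu, adj.left_triangle_components]
  · intro M N
    constructor
    · rw [← Category.assoc, ← Category.assoc, ← μ_natural, Category.assoc, Category.assoc]
      simp only [Functor.comp_obj]
      rw [hct]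
      simp [tensorHom_comp_tensorHom, adj.left_triangle_components]
    · have hn := adj.counit.naturality (μ F M N)
      simp only [Functor.id_obj, Functor.comp_obj, Functor.id_map, Functor.comp_map] at hn
      rw [Category.assoc, Category.assoc, ← hn, ← Category.assoc, ← Category.assoc, ← F.map_comp, ← F.map_comp,
        Category.assoc, ← hut M N]
      simp only [Functor.id_obj] at hut ⊢; exact adj.left_triangle_components (M ⊗ N)
end

section
/- If F : 𝒞 → 𝒟 is a strong monoidal functor between monoidal categories with coequalizers preserved by tensor, and F preserves coequalizers, then for any monoid B in 𝒞 and bimodules M, N the canonical map FM ⊗_{FB} FN ⟶ F(M ⊗_B N) is an isomorphism. -/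
open CategoryTheory MonoidalCategory Limits Functor.LaxMonoidal

/-- If `F : C ⥤ D` is a strong monoidal functor between monoidal categories with coequalizers
preserved by tensoring, and `F` preserves coequalizers, then for any monoid `B` in `C` and
`B`-bimodules `M`, `N` the canonical map `FM ⊗_{FB} FN ⟶ F(M ⊗_B N)` is an isomorphism. -/
theorem stmt_12 {C D : Type*} [Category C] [Category D]
    [MonoidalCategory C] [MonoidalCategory D]
    [HasCoequalizers C] [HasCoequalizers D]
    [∀ X : C, PreservesColimitsOfSize.{0, 0} (tensorLeft X)]
    [∀ X : C, PreservesColimitsOfSize.{0, 0} (tensorRight X)]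
    [∀ X : D, PreservesColimitsOfSize.{0, 0} (tensorLeft X)]
    [∀ X : D, PreservesColimitsOfSize.{0, 0} (tensorRight X)]
    (F : C ⥤ D) [F.Monoidal]
    [PreservesColimitsOfShape WalkingParallelPair F]
    (B : Mon C) (M N : Bimod B B)
    (t : coequalizer
            ((μ F M.X B.X ≫ F.map M.actRight) ▷ F.obj N.X)
            ((α_ (F.obj M.X) (F.obj B.X) (F.obj N.X)).hom ≫
              (F.obj M.X ◁ (μ F B.X N.X ≫ F.map N.actLeft))) ⟶
          F.obj (coequalizer (M.actRight ▷ N.X) ((α_ M.X B.X N.X).hom ≫ (M.X ◁ N.actLeft))))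
    (ht : coequalizer.π _ _ ≫ t = μ F M.X N.X ≫ F.map (coequalizer.π _ _)) :
    IsIso t := by
  let e₀ : (F.obj M.X ⊗ F.obj B.X) ⊗ F.obj N.X ≅ F.obj ((M.X ⊗ B.X) ⊗ N.X) :=
    (Functor.Monoidal.μIso F M.X B.X ⊗ᵢ Iso.refl (F.obj N.X)) ≪≫
      Functor.Monoidal.μIso F (M.X ⊗ B.X) N.X
  let e₁ : F.obj M.X ⊗ F.obj N.X ≅ F.obj (M.X ⊗ N.X) := Functor.Monoidal.μIso F M.X N.X
  have comm₁ : ((μ F M.X B.X ≫ F.map M.actRight) ▷ F.obj N.X) ≫ e₁.hom =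
      e₀.hom ≫ F.map (M.actRight ▷ N.X) := by
    simp only [e₀, e₁, Iso.trans_hom, Functor.Monoidal.μIso_hom,
      tensorIso_hom, Iso.refl_hom, tensorHom_id, comp_whiskerRight, Category.assoc,
      μ_natural_left]
  have comm₂ : ((α_ (F.obj M.X) (F.obj B.X) (F.obj N.X)).hom ≫
        (F.obj M.X ◁ (μ F B.X N.X ≫ F.map N.actLeft))) ≫ e₁.hom =
      e₀.hom ≫ F.map ((α_ M.X B.X N.X).hom ≫ (M.X ◁ N.actLeft)) := by
    simp only [e₀, e₁, Iso.trans_hom, Functor.Monoidal.μIso_hom,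
      tensorIso_hom, Iso.refl_hom, tensorHom_id, MonoidalCategory.whiskerLeft_comp,
      Category.assoc, μ_natural_right, F.map_comp]
    rw [← associativity_assoc]
  let i : parallelPair ((μ F M.X B.X ≫ F.map M.actRight) ▷ F.obj N.X)
      ((α_ (F.obj M.X) (F.obj B.X) (F.obj N.X)).hom ≫
        (F.obj M.X ◁ (μ F B.X N.X ≫ F.map N.actLeft))) ≅
      parallelPair (F.map (M.actRight ▷ N.X))
        (F.map ((α_ M.X B.X N.X).hom ≫ (M.X ◁ N.actLeft))) :=
    parallelPair.ext e₀ e₁ comm₁ comm₂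
  let j := HasColimit.isoOfNatIso i
  have ht' : t = j.hom ≫
      (PreservesCoequalizer.iso F (M.actRight ▷ N.X)
        ((α_ M.X B.X N.X).hom ≫ (M.X ◁ N.actLeft))).hom := by
    apply coequalizer.hom_ext
    rw [ht]
    have h1 : coequalizer.π _ _ ≫ j.hom =
        i.hom.app WalkingParallelPair.one ≫ coequalizer.π _ _ :=
      HasColimit.isoOfNatIso_ι_hom i WalkingParallelPair.one
    rw [reassoc_of% h1]
    have h2 : i.hom.app WalkingParallelPair.one = e₁.hom := rfl
    rw [h2, PreservesCoequalizer.iso_hom, ι_comp_coequalizerComparison]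
    rfl
  rw [ht']
  infer_instance
end
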